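/- Fix integers r ≥ 3 and 1 ≤ t ≤ r-2, homogeneous forms M_0,...,M_t ∈ k[x_{t+1},...,x_r] of the same degree n-1 that are algebraically dependent over k, set Q = M_0 x_0 + ... + M_t x_t, fix d > n, μ = ⌊d/n⌋, and forms P_k ∈ k[x_{t+1},...,x_r] of degree d - kn for k = 0,...,μ. Then the Permutti polynomial f = Σ_{k=0}^{μ} Q^k P_k has identically vanishing Hessian determinant. -/

import Mathlib

open MvPolynomial

namespace PermuttiAux

variable {R σ τ : Type*} [CommRing R]

lemma pderiv_pderiv_comm [DecidableEq σ] (i j : σ) (p : MvPolynomial σ R) :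
    pderiv i (pderiv j p) = pderiv j (pderiv i p) := by
  rcases eq_or_ne i j with rfl | hij
  · rfl
  · rw [p.as_sum]
    simp only [map_sum, pderiv_monomial]
    refine Finset.sum_congr rfl fun s _ => ?_
    rw [Finsupp.tsub_apply, Finsupp.tsub_apply, Finsupp.single_eq_of_ne hij,
      Finsupp.single_eq_of_ne (Ne.symm hij), tsub_zero, tsub_zero, tsub_tsub, tsub_tsub,
      add_comm (Finsupp.single i 1), mul_right_comm]

lemma degree_of_mem_support {F : MvPolynomial σ R} {e : ℕ} (hF : F.IsHomogeneous e)
    {s : σ →₀ ℕ} (hs : s ∈ F.support) : s.degree = e := by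
  by_contra h
  exact Finsupp.mem_support_iff.mp hs (hF.coeff_eq_zero h)

lemma single_add_tsub {s : σ →₀ ℕ} {i : σ} (h : s i ≠ 0) :
    Finsupp.single i 1 + (s - Finsupp.single i 1) = s := by
  ext j
  rcases eq_or_ne j i with rfl | hji
  · simp only [Finsupp.add_apply, Finsupp.tsub_apply, Finsupp.single_eq_same]
    omega
  · simp [Finsupp.single_eq_of_ne' (Ne.symm hji)]

lemma degree_eq_sum_univ [Fintype σ] (s : σ →₀ ℕ) : s.degree = ∑ i, s i :=
  Finset.sum_subset (Finset.subset_univ _) fun _ _ hx => Finsupp.notMem_support_iff.mp hx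

lemma degree_tsub_single [Fintype σ] [DecidableEq σ] {s : σ →₀ ℕ} {i : σ} {e : ℕ}
    (h : s i ≠ 0) (hd : s.degree = e) : (s - Finsupp.single i 1).degree = e - 1 := by
  have hsum : ∑ j : σ, s j = e := by rw [← degree_eq_sum_univ, hd]
  have e1 : ∑ j ∈ Finset.univ.erase i, s j + s i = e := by
    rw [Finset.sum_erase_add _ _ (Finset.mem_univ i)]; exact hsum
  have e2 : (s - Finsupp.single i 1).degree
      = ∑ j ∈ Finset.univ.erase i, s j + (s i - 1) := by
    rw [degree_eq_sum_univ, ← Finset.sum_erase_add _ _ (Finset.mem_univ i)]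
    congr 1
    · refine Finset.sum_congr rfl fun j hj => ?_
      rw [Finsupp.tsub_apply, Finsupp.single_eq_of_ne' (Ne.symm (Finset.mem_erase.mp hj).1),
        tsub_zero]
    · rw [Finsupp.tsub_apply, Finsupp.single_eq_same]
  rw [e2]
  omega

/-- chain rule -/
lemma pderiv_aeval [Fintype σ] [DecidableEq σ] [DecidableEq τ]
    (g : σ → MvPolynomial τ R) (j : τ) (F : MvPolynomial σ R) :
    pderiv j (aeval g F) = ∑ i : σ, aeval g (pderiv i F) * pderiv j (g i) := by
  induction F using MvPolynomial.induction_on with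
  | C a => simp
  | add p q hp hq => simp only [map_add, hp, hq, add_mul, Finset.sum_add_distrib]
  | mul_X p l hp =>
    have h1 : ∀ i : σ, aeval g (pderiv i (p * X l)) =
        aeval g (pderiv i p) * g l + aeval g p * (if i = l then 1 else 0) := by
      intro i
      rw [pderiv_mul]
      by_cases h : i = l
      · subst h; simp
      · rw [pderiv_X_of_ne (Ne.symm h)]; simp [h]
    have h2 : ∑ i : σ, aeval g (pderiv i (p * X l)) * pderiv j (g i) =
        ∑ i : σ, (aeval g (pderiv i p) * g l + aeval g p * (if i = l then 1 else 0))
          * pderiv j (g i) := Finset.sum_congr rfl fun i _ => by rw [h1]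
    rw [map_mul, aeval_X, pderiv_mul, hp, h2]
    simp only [add_mul, Finset.sum_add_distrib]
    congr 1
    · rw [Finset.sum_mul]
      exact Finset.sum_congr rfl fun i _ => by ring
    · rw [Finset.sum_eq_single l]
      · simp
      · intro i _ hne; simp [hne]
      · intro h; exact absurd (Finset.mem_univ l) h

/-- Euler identity -/
lemma euler [Fintype σ] [DecidableEq σ] {F : MvPolynomial σ R} {e : ℕ}
    (hF : F.IsHomogeneous e) :
    ∑ i : σ, X i * pderiv i F = C (e : R) * F := by
  have step : ∀ s ∈ F.support, ∀ i : σ, X i * pderiv i (monomial s (coeff s F)) =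
      monomial s (coeff s F * (s i : R)) := by
    intro s _ i
    rw [pderiv_monomial]
    by_cases h : s i = 0
    · simp [h]
    · rw [show (X i : MvPolynomial σ R) = monomial (Finsupp.single i 1) 1 from rfl,
        monomial_mul, one_mul, single_add_tsub h]
  calc ∑ i : σ, X i * pderiv i F
      = ∑ i : σ, ∑ s ∈ F.support, X i * pderiv i (monomial s (coeff s F)) := by
        refine Finset.sum_congr rfl fun i _ => ?_
        conv_lhs => rw [F.as_sum]
        rw [map_sum, Finset.mul_sum]
    _ = ∑ s ∈ F.support, ∑ i : σ, X i * pderiv i (monomial s (coeff s F)) :=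
        Finset.sum_comm
    _ = ∑ s ∈ F.support, C (e : R) * monomial s (coeff s F) := by
        refine Finset.sum_congr rfl fun s hs => ?_
        rw [Finset.sum_congr rfl fun i _ => step s hs i, ← map_sum, ← Finset.mul_sum,
          C_mul_monomial]
        congr 1
        rw [← Nat.cast_sum, ← degree_eq_sum_univ, degree_of_mem_support hF hs, mul_comm]
    _ = C (e : R) * F := by
        rw [← Finset.mul_sum]
        congr 1
        exact (F.as_sum).symm

/-- pderiv of homogeneous is homogeneous -/
lemma isHomogeneous_pderiv [Fintype σ] [DecidableEq σ] {F : MvPolynomial σ R} {e : ℕ}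
    (hF : F.IsHomogeneous e) (i : σ) : (pderiv i F).IsHomogeneous (e - 1) := by
  rw [F.as_sum, map_sum]
  apply IsHomogeneous.sum
  intro s hs
  rw [pderiv_monomial]
  by_cases h : s i = 0
  · simp only [h, Nat.cast_zero, mul_zero, map_zero]
    exact isHomogeneous_zero _ _ _
  · exact isHomogeneous_monomial _ (degree_tsub_single h (degree_of_mem_support hF hs))

end PermuttiAux

/-- Every Permutti polynomial `f = Σ_{m=0}^{μ} Q^m P_m`, with
`Q = Σ_{i=0}^{t} M_i x_i`, the `M_i` algebraically dependent forms of degree `n-1`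
in the variables `x_{t+1},…,x_r`, and `P_m` forms of degree `d - m n` in those same
variables, has identically vanishing Hessian determinant. -/
theorem permutti_vanishing_hessian {k : Type*} [Field k] [CharZero k]
    {r t n d : ℕ} (hr : 3 ≤ r) (ht1 : 1 ≤ t) (ht2 : t ≤ r - 2) (hn : 1 ≤ n) (hd : n < d)
    (M : Fin (r + 1) → MvPolynomial (Fin (r + 1)) k)
    (hMhom : ∀ i : Fin (r + 1), (i : ℕ) ≤ t → (M i).IsHomogeneous (n - 1))
    (hMvars : ∀ i : Fin (r + 1), (i : ℕ) ≤ t → ∀ j ∈ (M i).vars, t < (j : ℕ))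
    (hMdep : ¬ AlgebraicIndependent k (fun i : {i : Fin (r + 1) // (i : ℕ) ≤ t} => M i.1))
    (P : ℕ → MvPolynomial (Fin (r + 1)) k)
    (hPhom : ∀ m, m ≤ d / n → (P m).IsHomogeneous (d - m * n))
    (hPvars : ∀ m, m ≤ d / n → ∀ j ∈ (P m).vars, t < (j : ℕ)) :
    (Matrix.of fun i j : Fin (r + 1) =>
        MvPolynomial.pderiv i (MvPolynomial.pderiv j
          (∑ m ∈ Finset.range (d / n + 1),
            (∑ i ∈ Finset.univ.filter (fun i : Fin (r + 1) => (i : ℕ) ≤ t),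
              M i * MvPolynomial.X i) ^ m * P m))).det = 0 := by
  classical
  have hMhomF : ∀ i : Fin (r + 1), (i : ℕ) ≤ t → (M i).IsHomogeneous (n - 1) := by
    intro i hi
    exact hMhom i hi
  have hMvarsF : ∀ i : Fin (r + 1), (i : ℕ) ≤ t → ∀ j ∈ (M i).vars, t < (j : ℕ) := by
    intro i hi j hj
    exact hMvars i hi j hj
  -- Existence of a nonzero homogeneous polynomial annihilating the `M i`.
  have hexists : ∃ e : ℕ, ∃ F : MvPolynomial {i : Fin (r + 1) // (i : ℕ) ≤ t} k,
      F ≠ 0 ∧ F.IsHomogeneous e ∧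
        aeval (fun i : {i : Fin (r + 1) // (i : ℕ) ≤ t} => M i.1) F = 0 := by
    rcases lt_or_ge n 2 with h2 | h2
    · -- here `n = 1`, so all the `M i` are constants
      have hn1 : n - 1 = 0 := by omega
      have hM0 : ∀ i : {i : Fin (r + 1) // (i : ℕ) ≤ t}, M i.1 = C (coeff 0 (M i.1)) := by
        intro i
        have h := hMhomF i.1 i.2
        rw [hn1] at h
        calc M i.1 = homogeneousComponent 0 (M i.1) := by
              rw [homogeneousComponent_of_mem ((mem_homogeneousSubmodule _ _).mpr h)]
              simp
          _ = C (coeff 0 (M i.1)) := homogeneousComponent_zero _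
      set i0 : {i : Fin (r + 1) // (i : ℕ) ≤ t} := ⟨⟨0, by omega⟩, by simp⟩ with hi0
      set i1 : {i : Fin (r + 1) // (i : ℕ) ≤ t} := ⟨⟨1, by omega⟩, by simpa using ht1⟩ with hi1
      have hne : i0 ≠ i1 := by
        intro hh
        have h01 : (0 : ℕ) = 1 := congrArg (fun x : {i : Fin (r + 1) // (i : ℕ) ≤ t} =>
          (x.1 : ℕ)) hh
        omega
      by_cases hc0 : coeff 0 (M i0.1) = 0
      · refine ⟨1, X i0, X_ne_zero _, isHomogeneous_X _ _, ?_⟩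
        rw [aeval_X]
        show M i0.1 = 0
        rw [hM0 i0, hc0, map_zero]
      · refine ⟨1, C (coeff 0 (M i1.1)) * X i0 - C (coeff 0 (M i0.1)) * X i1, ?_, ?_, ?_⟩
        · intro hzero
          have hco := congrArg (coeff (Finsupp.single i1 1)) hzero
          rw [coeff_sub, coeff_C_mul, coeff_C_mul, coeff_X', coeff_X',
            if_neg (by simp [Finsupp.single_eq_single_iff, hne]), if_pos rfl] at hco
          simp only [mul_zero, mul_one, zero_sub, coeff_zero, neg_eq_zero] at hco
          exact hc0 hco
        · exact ((isHomogeneous_X _ _).C_mul _).sub ((isHomogeneous_X _ _).C_mul _)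
        · rw [map_sub, map_mul, map_mul, aeval_X, aeval_X, aeval_C, aeval_C,
            MvPolynomial.algebraMap_eq]
          show C (coeff 0 (M i1.1)) * M i0.1 - C (coeff 0 (M i0.1)) * M i1.1 = 0
          rw [hM0 i0, hM0 i1]
          simp [coeff_C]
          ring
    · -- here `n ≥ 2`; use degree separation of homogeneous components
      have hpos : 0 < n - 1 := by omega
      rw [algebraicIndependent_iff] at hMdep
      push_neg at hMdep
      obtain ⟨F', hF'ann, hF'ne⟩ := hMdep
      have hcomp : ∃ e ∈ Finset.range (F'.totalDegree + 1),
          homogeneousComponent e F' ≠ 0 := by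
        by_contra hcon
        push_neg at hcon
        apply hF'ne
        rw [← sum_homogeneousComponent F']
        exact Finset.sum_eq_zero hcon
      obtain ⟨e0, he0mem, he0ne⟩ := hcomp
      have hhom : ∀ e : ℕ, (aeval (fun i : {i : Fin (r + 1) // (i : ℕ) ≤ t} => M i.1)
          (homogeneousComponent e F')).IsHomogeneous ((n - 1) * e) :=
        fun e => (homogeneousComponent_isHomogeneous e F').aeval _ (fun i => hMhomF i.1 i.2)
      have hkey : aeval (fun i : {i : Fin (r + 1) // (i : ℕ) ≤ t} => M i.1)
          (homogeneousComponent e0 F') = 0 := by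
        have h0 : ∑ e ∈ Finset.range (F'.totalDegree + 1),
            aeval (fun i : {i : Fin (r + 1) // (i : ℕ) ≤ t} => M i.1)
              (homogeneousComponent e F') = 0 := by
          rw [← map_sum, sum_homogeneousComponent, hF'ann]
        have h1 := congrArg (homogeneousComponent ((n - 1) * e0)) h0
        rw [map_sum, map_zero] at h1
        rw [Finset.sum_congr rfl (fun e _ => homogeneousComponent_of_mem
          ((mem_homogeneousSubmodule _ _).mpr (hhom e)))] at h1
        rw [Finset.sum_eq_single e0 (fun e _ hne => by
            rw [if_neg (fun hc => hne (Nat.eq_of_mul_eq_mul_left hpos hc).symm)])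
          (fun habs => absurd he0mem habs)] at h1
        rwa [if_pos rfl] at h1
      exact ⟨e0, homogeneousComponent e0 F', he0ne,
        homogeneousComponent_isHomogeneous _ _, hkey⟩
  obtain ⟨F, hFne, hFhom, hFann⟩ := Nat.find_spec hexists
  set e := Nat.find hexists with he
  have he1 : 1 ≤ e := by
    by_contra hcon
    have h0 : e = 0 := by omega
    rw [h0] at hFhom
    have hC : F = C (coeff 0 F) := by
      calc F = homogeneousComponent 0 F := by
            rw [homogeneousComponent_of_mem ((mem_homogeneousSubmodule _ _).mpr hFhom)]
            simp
        _ = C (coeff 0 F) := homogeneousComponent_zero _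
    apply hFne
    rw [hC] at hFann ⊢
    rw [aeval_C, MvPolynomial.algebraMap_eq, C_eq_zero] at hFann
    rw [hFann, map_zero]
  have hpart : ∃ ii, pderiv ii F ≠ 0 := by
    by_contra hcon
    push_neg at hcon
    have heu := PermuttiAux.euler hFhom
    rw [Finset.sum_eq_zero (fun i _ => by rw [hcon i, mul_zero])] at heu
    rcases mul_eq_zero.mp heu.symm with hc | hc
    · rw [C_eq_zero, Nat.cast_eq_zero] at hc; omega
    · exact hFne hc
  obtain ⟨ii0, hii0⟩ := hpart
  set a : {i : Fin (r + 1) // (i : ℕ) ≤ t} → MvPolynomial (Fin (r + 1)) k :=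
    fun ii => aeval (fun i : {i : Fin (r + 1) // (i : ℕ) ≤ t} => M i.1) (pderiv ii F)
    with ha
  have ha0 : a ii0 ≠ 0 := by
    intro hz
    have hP : ∃ F' : MvPolynomial {i : Fin (r + 1) // (i : ℕ) ≤ t} k,
        F' ≠ 0 ∧ F'.IsHomogeneous (e - 1) ∧
          aeval (fun i : {i : Fin (r + 1) // (i : ℕ) ≤ t} => M i.1) F' = 0 :=
      ⟨pderiv ii0 F, hii0, PermuttiAux.isHomogeneous_pderiv hFhom ii0, hz⟩
    have hle : Nat.find hexists ≤ e - 1 := Nat.find_le hP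
    omega
  have hrel1 : ∀ j : Fin (r + 1), ∑ ii, a ii * pderiv j (M ii.1) = 0 := by
    intro j
    have h := PermuttiAux.pderiv_aeval
      (fun i : {i : Fin (r + 1) // (i : ℕ) ≤ t} => M i.1) j F
    rw [hFann, map_zero] at h
    exact h.symm
  have hrel2 : ∑ ii, a ii * M ii.1 = 0 := by
    have heu := congrArg (aeval (fun i : {i : Fin (r + 1) // (i : ℕ) ≤ t} => M i.1))
      (PermuttiAux.euler hFhom)
    rw [map_sum, map_mul, aeval_C, hFann, mul_zero] at heu
    simp only [map_mul, aeval_X] at heu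
    calc ∑ ii, a ii * M ii.1 = ∑ ii, M ii.1 * a ii :=
          Finset.sum_congr rfl fun ii _ => mul_comm _ _
      _ = 0 := heu
  -- now the Hessian computation
  set Q : MvPolynomial (Fin (r + 1)) k :=
    ∑ i ∈ Finset.univ.filter (fun i : Fin (r + 1) => (i : ℕ) ≤ t), M i * X i with hQ
  set f : MvPolynomial (Fin (r + 1)) k :=
    ∑ m ∈ Finset.range (d / n + 1), Q ^ m * P m with hf
  have hzero_t : ∀ j : Fin (r + 1), (j : ℕ) ≤ t → ∀ i : Fin (r + 1), (i : ℕ) ≤ t →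
      pderiv j (M i) = 0 := by
    intro j hj i hi
    apply pderiv_eq_zero_of_notMem_vars
    intro hmem
    exact absurd (hMvarsF i hi j hmem) (by omega)
  have hzero_P : ∀ j : Fin (r + 1), (j : ℕ) ≤ t → ∀ m, m ≤ d / n →
      pderiv j (P m) = 0 := by
    intro j hj m hm
    apply pderiv_eq_zero_of_notMem_vars
    intro hmem
    exact absurd (hPvars m hm j hmem) (by omega)
  have hQd : ∀ ii : {i : Fin (r + 1) // (i : ℕ) ≤ t}, pderiv ii.1 Q = M ii.1 := by
    intro ii
    rw [hQ, map_sum]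
    rw [Finset.sum_congr rfl (fun i hi => by
      rw [pderiv_mul, hzero_t ii.1 ii.2 i (Finset.mem_filter.mp hi).2, zero_mul, zero_add])]
    rw [Finset.sum_eq_single_of_mem ii.1
      (Finset.mem_filter.mpr ⟨Finset.mem_univ _, ii.2⟩)
      (fun i _ hne => by rw [pderiv_X_of_ne hne, mul_zero])]
    rw [pderiv_X_self, mul_one]
  set g : MvPolynomial (Fin (r + 1)) k :=
    ∑ m ∈ Finset.range (d / n + 1),
      (m : MvPolynomial (Fin (r + 1)) k) * Q ^ (m - 1) * P m with hg
  have hfd : ∀ ii : {i : Fin (r + 1) // (i : ℕ) ≤ t}, pderiv ii.1 f = M ii.1 * g := by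
    intro ii
    rw [hf, hg, map_sum, Finset.mul_sum]
    refine Finset.sum_congr rfl fun m hm => ?_
    rw [pderiv_mul, hzero_P ii.1 ii.2 m (Nat.lt_succ_iff.mp (Finset.mem_range.mp hm)),
      mul_zero, add_zero, pderiv_pow, hQd ii]
    ring
  set H := Matrix.of (fun i j : Fin (r + 1) => pderiv i (pderiv j f)) with hH
  have hrow : ∀ (ii : {i : Fin (r + 1) // (i : ℕ) ≤ t}) (j : Fin (r + 1)),
      H ii.1 j = pderiv j (M ii.1) * g + M ii.1 * pderiv j g := by
    intro ii j
    show pderiv ii.1 (pderiv j f) = _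
    rw [PermuttiAux.pderiv_pderiv_comm, hfd ii, pderiv_mul]
  set v : Fin (r + 1) → MvPolynomial (Fin (r + 1)) k :=
    fun i => if h : (i : ℕ) ≤ t then a ⟨i, h⟩ else 0 with hv
  have hvH : Matrix.vecMul v H = 0 := by
    funext j
    show ∑ i, v i * H i j = 0
    have s1 : ∑ i, v i * H i j
        = ∑ i ∈ Finset.univ.filter (fun i : Fin (r + 1) => (i : ℕ) ≤ t), v i * H i j := by
      refine (Finset.sum_subset (Finset.filter_subset _ _) fun i _ hi => ?_).symm
      have : ¬ (i : ℕ) ≤ t := by simpa using hi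
      rw [hv]
      simp only [dif_neg this, zero_mul]
    have s2 : ∑ i ∈ Finset.univ.filter (fun i : Fin (r + 1) => (i : ℕ) ≤ t), v i * H i j
        = ∑ ii : {i : Fin (r + 1) // (i : ℕ) ≤ t}, v ii.1 * H ii.1 j :=
      Finset.sum_subtype _ (fun i => by simp) _
    have s3 : ∀ ii : {i : Fin (r + 1) // (i : ℕ) ≤ t},
        v ii.1 * H ii.1 j = a ii * pderiv j (M ii.1) * g + a ii * M ii.1 * pderiv j g := by
      intro ii
      rw [hrow ii j, hv]
      simp only [dif_pos ii.2, Subtype.coe_eta]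
      ring
    rw [s1, s2, Finset.sum_congr rfl fun ii _ => s3 ii, Finset.sum_add_distrib,
      ← Finset.sum_mul, ← Finset.sum_mul, hrel1 j, hrel2, zero_mul, zero_mul, add_zero]
  have h1 : Matrix.vecMul v (H * H.adjugate) = 0 := by
    rw [← Matrix.vecMul_vecMul, hvH, Matrix.zero_vecMul]
  rw [Matrix.mul_adjugate] at h1
  have h2 := congrFun h1 ii0.1
  simp only [Pi.zero_apply] at h2
  have h3 : v ii0.1 * H.det = 0 := by
    rw [← h2]
    show _ = ∑ i, v i * (H.det • (1 : Matrix (Fin (r + 1)) (Fin (r + 1))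
      (MvPolynomial (Fin (r + 1)) k))) i ii0.1
    rw [Finset.sum_eq_single_of_mem ii0.1 (Finset.mem_univ _) (fun i _ hne => by
      simp [Matrix.smul_apply, Matrix.one_apply, hne])]
    simp [Matrix.smul_apply, Matrix.one_apply, mul_comm]
  have hv0 : v ii0.1 ≠ 0 := by
    rw [hv]
    simpa only [dif_pos ii0.2, Subtype.coe_eta] using ha0
  rcases mul_eq_zero.mp h3 with hc | hc
  · exact absurd hc hv0
  · exact hc
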